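/- Every global state of the information frame F(𝔻) derived from a domain 𝔻 with basis B is a directed subset of 𝔻. -/
import Mathlib


/-- The data `(Con, Ent)` on token set `A` forms an information frame.
`Con i` is the set of finite sets of tokens consistent with `i`, and
`Ent i X a` means `X ⊢ᵢ a`.  The accessibility relation is `i R j ↔ {i} ∈ Con j`. -/
structure IsInfoFrame {A : Type*} [DecidableEq A]
    (Con : A → Set (Finset A)) (Ent : A → Finset A → A → Prop) : Prop where
  self_con : ∀ i : A, ({i} : Finset A) ∈ Con i
  con_down : ∀ (i : A) (X Y : Finset A), Y ⊆ X → X ∈ Con i → Y ∈ Con i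
  sound : ∀ (i : A) (X Y : Finset A), X ∈ Con i → (∀ b ∈ Y, Ent i X b) → Y ∈ Con i
  weaken : ∀ (i : A) (X Y : Finset A) (a : A),
    X ∈ Con i → Y ∈ Con i → X ⊆ Y → Ent i X a → Ent i Y a
  cut : ∀ (i : A) (X Y : Finset A) (a : A),
    X ∈ Con i → (∀ b ∈ Y, Ent i X b) → Ent i Y a → Ent i X a
  con_transfer : ∀ i j : A, ({i} : Finset A) ∈ Con j → Con i ⊆ Con j
  ent_transfer : ∀ (i j : A) (X : Finset A) (a : A),
    ({i} : Finset A) ∈ Con j → X ∈ Con i → Ent i X a → Ent j X a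
  interp : ∀ (i : A) (X Y : Finset A), X ∈ Con i → (∀ b ∈ Y, Ent i X b) →
    ∃ (e : A) (Z : Finset A), Z ∈ Con e ∧ (∀ b ∈ insert e Z, Ent i X b) ∧
      (∀ b ∈ Y, Ent e Z b)

/-- Finite consistency of a subset `x` of tokens. -/
def FinConsistent {A : Type*} (Con : A → Set (Finset A)) (x : Set A) : Prop :=
  ∀ F : Finset A, ↑F ⊆ x → ∃ i ∈ x, F ∈ Con i

/-- Closure of `x` under entailment. -/
def EntClosed {A : Type*} (Con : A → Set (Finset A))
    (Ent : A → Finset A → A → Prop) (x : Set A) : Prop :=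
  ∀ i ∈ x, ∀ X : Finset A, ↑X ⊆ x → X ∈ Con i → ∀ a : A, Ent i X a → a ∈ x

/-- Completeness of `x`. -/
def EntComplete {A : Type*} (Con : A → Set (Finset A))
    (Ent : A → Finset A → A → Prop) (x : Set A) : Prop :=
  ∀ a ∈ x, ∃ i ∈ x, ∃ X : Finset A, ↑X ⊆ x ∧ X ∈ Con i ∧ Ent i X a

/-- A (global) state of an information frame. -/
def IsState {A : Type*} (Con : A → Set (Finset A))
    (Ent : A → Finset A → A → Prop) (x : Set A) : Prop :=
  FinConsistent Con x ∧ EntClosed Con Ent x ∧ EntComplete Con Ent x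

/-- `x` is way below (approximates) `y`. -/
def WayBelow {D : Type*} [PartialOrder D] (x y : D) : Prop :=
  ∀ S : Set D, S.Nonempty → DirectedOn (· ≤ ·) S → ∀ s : D, IsLUB S s → y ≤ s →
    ∃ u ∈ S, x ≤ u

/-- `D` is directed complete. -/
def IsDcpo (D : Type*) [PartialOrder D] : Prop :=
  ∀ S : Set D, S.Nonempty → DirectedOn (· ≤ ·) S → ∃ s : D, IsLUB S s

/-- `B` is a basis of the dcpo `D`: every element is the least upper bound of a
directed set of basis elements way below it. -/
def IsBasis {D : Type*} [PartialOrder D] (B : Set D) : Prop :=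
  ∀ x : D, ∃ S : Set D, S ⊆ B ∧ (∀ b ∈ S, WayBelow b x) ∧ S.Nonempty ∧
    DirectedOn (· ≤ ·) S ∧ IsLUB S x

/-- The consistency predicates of the information frame `F(𝔻)` on the basis `B`. -/
def domCon {D : Type*} [PartialOrder D] (B : Set D) : ↥B → Set (Finset ↥B) :=
  fun i => {({i} : Finset ↥B)} ∪ {X : Finset ↥B | ∀ b ∈ X, WayBelow (b : D) (i : D)}

/-- The entailment relations of the information frame `F(𝔻)`:
`X ⊨ᵢ a` iff `a ≪ b` for some `b ∈ X ∪ {i}`. -/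
def domEnt {D : Type*} [PartialOrder D] [DecidableEq D] (B : Set D) :
    ↥B → Finset ↥B → ↥B → Prop :=
  fun i X a => ∃ b ∈ insert i X, WayBelow (a : D) (b : D)

lemma wayBelow_le {D : Type*} [PartialOrder D] {a b : D} (h : WayBelow a b) : a ≤ b := by
  obtain ⟨u, hu, hle⟩ := h {b} ⟨b, rfl⟩
    (fun p hp q hq => ⟨b, rfl, hp.le.trans (le_refl b) |>.trans_eq rfl, hq.le⟩)
    b isLUB_singleton le_rfl
  simp at hu; subst hu; exact hle

theorem stmt15 {D : Type*} [PartialOrder D] [DecidableEq D] (B : Set D)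
    (hdcpo : IsDcpo D) (hbasis : IsBasis B)
    (x : Set ↥B) (hx : IsState (domCon B) (domEnt B) x) :
    (Subtype.val '' x).Nonempty ∧ DirectedOn (· ≤ ·) (Subtype.val '' x) := by
  constructor
  · obtain ⟨i, hi, _⟩ := hx.1 ∅ (by simp)
    exact ⟨i, i, hi, rfl⟩
  · rintro _ ⟨a, ha, rfl⟩ _ ⟨b, hb, rfl⟩
    obtain ⟨i, hi, hcon⟩ := hx.1 {a, b} (by
      intro c hc; simp at hc; rcases hc with rfl | rfl <;> assumption)
    refine ⟨i, ⟨i, hi, rfl⟩, ?_, ?_⟩ <;>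
    · rcases hcon with h | h
      · simp only [Set.mem_singleton_iff] at h
        have : a = i ∧ b = i := by
          constructor <;> [have := Finset.mem_singleton.mp (h ▸ Finset.mem_insert_self a {b});
            have := Finset.mem_singleton.mp (h ▸ Finset.mem_insert_of_mem (Finset.mem_singleton_self b))] <;>
          exact this
        simp [this.1, this.2]
      · first
        | exact wayBelow_le (h a (by simp))
        | exact wayBelow_le (h b (by simp))
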